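/- Let v ∈ ℂ^N with v ≠ 0 and let h be a positive-definite Hermitian N×N matrix. Then for all Hermitian N×N matrices H_0, …, H_{N−1}: Σ_{j=0}^{N−1} (−1)^j · (d/dt at t = 0 of [ (v*(h+tH_j)v)^{−N} · pbar(v, h+tH_j)(H_0, …, H_{j−1}, H_{j+1}, …, H_{N−1}) ]) = 0. In other words, the (N−1)-form (v*hv)^{−N} p̄(v) on the space of positive-definite Hermitian matrices is closed. -/

import Mathlib

open Matrix BigOperators
open scoped ComplexOrder

noncomputable section

/-- The `i`-th entry of the row vector `v* h`, where `v*` is the conjugate transpose of the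
column vector `v`. -/
def vstarM {N : ℕ} (v : Fin N → ℂ) (h : Matrix (Fin N) (Fin N) ℂ) (i : Fin N) : ℂ :=
  ∑ j, (starRingEnd ℂ) (v j) * h j i

/-- The scalar `v* h v`. -/
def vhv {N : ℕ} (v : Fin N → ℂ) (h : Matrix (Fin N) (Fin N) ℂ) : ℂ :=
  ∑ i, vstarM v h i * v i

/-- `pbar(v,h)(H_1,…,H_{N−1})` : the value of the `(N-1)`-form `p̄(v)` at the point `h` on
the tangent vectors `H_1,…,H_{N-1}`.  Here `N = n+2`; the matrix `M⁽ⁱ⁾` has `(k,l)`-entry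
`(v*H_l)_{r_k}` where `r` is the decreasing enumeration of `{0,…,N-1}` omitting `i`
(`r k = Fin.rev ((Fin.rev i).succAbove k)`), and the sign `(−1)^{i−1}` (1-based) is
`(−1)^{i}` in 0-based indexing. -/
def pbar {n : ℕ} (v : Fin (n + 2) → ℂ) (h : Matrix (Fin (n + 2)) (Fin (n + 2)) ℂ)
    (H : Fin (n + 1) → Matrix (Fin (n + 2)) (Fin (n + 2)) ℂ) : ℂ :=
  2 * (-1 : ℂ) ^ ((n + 2) * (n + 1) / 2) *
    ∑ i : Fin (n + 2), (-1 : ℂ) ^ (i : ℕ) * vstarM v h i *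
      Matrix.det (Matrix.of fun k l : Fin (n + 1) =>
        vstarM v (H l) (Fin.rev ((Fin.rev i).succAbove k)))

/-- `dpbar(v)(H_1,…,H_N) = 2N(−1)^{(N+2)(N−1)/2} det M` where `M` has `(k,l)`-entry
`(v*H_l)_{N+1−k}` (1-based), i.e. `(v*H_l)_{Fin.rev k}` in 0-based indexing. -/
def dpbar {n : ℕ} (v : Fin (n + 2) → ℂ)
    (H : Fin (n + 2) → Matrix (Fin (n + 2)) (Fin (n + 2)) ℂ) : ℂ :=
  2 * (n + 2) * (-1 : ℂ) ^ ((n + 4) * (n + 1) / 2) *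
    Matrix.det (Matrix.of fun k l : Fin (n + 2) => vstarM v (H l) (Fin.rev k))

/- ### Auxiliary lemmas -/

lemma neg_one_pow_mul_self (m : ℕ) : (-1 : ℂ) ^ m * (-1 : ℂ) ^ m = 1 := by
  rw [← pow_add, ← two_mul, pow_mul, neg_one_sq, one_pow]

/-- Any alternating `(N+1)`-linear expression over `ℂ^N` vanishes: the Laplace expansion of the
singular `(N+1)×(N+1)` matrix whose last row is a combination of the others. -/
lemma alt_vanish {N : ℕ} (v : Fin N → ℂ) (x : Fin (N + 1) → Fin N → ℂ) :
    ∑ j : Fin (N + 1), (-1 : ℂ) ^ (j : ℕ) * (∑ i, x j i * v i) *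
      Matrix.det (Matrix.of fun k l : Fin N => x (j.succAbove l) k) = 0 := by
  classical
  set C : Matrix (Fin (N + 1)) (Fin (N + 1)) ℂ :=
    Matrix.of fun r c => (Fin.snoc (fun i : Fin N => x c i) (∑ i, x c i * v i) : Fin (N+1) → ℂ) r with hC
  have hdet : C.det = 0 := by
    have h1 : C = C.updateRow (Fin.last N)
        (∑ k, (Fin.snoc (fun i : Fin N => v i) 0 : Fin (N + 1) → ℂ) k • C k) := by
      ext r c
      rcases eq_or_ne r (Fin.last N) with hr | hr
      · subst hr
        rw [Matrix.updateRow_self]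
        simp only [Finset.sum_apply, Pi.smul_apply, smul_eq_mul]
        rw [Fin.sum_univ_castSucc]
        simp only [Fin.snoc_castSucc, Fin.snoc_last, zero_mul, add_zero, hC,
          Matrix.of_apply]
        exact Finset.sum_congr rfl fun i _ => by ring
      · rw [Matrix.updateRow_ne hr]
    rw [h1, Matrix.det_updateRow_sum]
    simp
  have hexp := Matrix.det_succ_row C (Fin.last N)
  rw [hdet] at hexp
  have hsub : ∀ j : Fin (N + 1), C.submatrix (Fin.last N).succAbove j.succAbove =
      Matrix.of fun k l : Fin N => x (j.succAbove l) k := by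
    intro j; ext k l
    simp [hC, Fin.succAbove_last]
  have hlast : ∀ j, C (Fin.last N) j = ∑ i, x j i * v i := by
    intro j; simp [hC]
  calc ∑ j : Fin (N + 1), (-1 : ℂ) ^ (j : ℕ) * (∑ i, x j i * v i) *
        Matrix.det (Matrix.of fun k l : Fin N => x (j.succAbove l) k)
      = (-1 : ℂ) ^ N * ∑ j : Fin (N + 1), (-1 : ℂ) ^ ((Fin.last N : Fin (N+1)) + j : ℕ) *
          C (Fin.last N) j * (C.submatrix (Fin.last N).succAbove j.succAbove).det := by
        rw [Finset.mul_sum]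
        refine Finset.sum_congr rfl fun j _ => ?_
        rw [hsub j, hlast j]
        have : ((Fin.last N : Fin (N+1)) : ℕ) = N := rfl
        rw [this, pow_add]
        have := neg_one_pow_mul_self (m := N)
        linear_combination (-((-1:ℂ)^(j:ℕ) * (∑ i, x j i * v i) *
          Matrix.det (Matrix.of fun k l : Fin N => x (j.succAbove l) k))) * this
    _ = 0 := by rw [← hexp, mul_zero]

/-- variant of `alt_vanish` with reversed rows in the determinants. -/
lemma alt_vanish' {N : ℕ} (v : Fin N → ℂ) (x : Fin (N + 1) → Fin N → ℂ) :
    ∑ j : Fin (N + 1), (-1 : ℂ) ^ (j : ℕ) * (∑ i, x j i * v i) *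
      Matrix.det (Matrix.of fun k l : Fin N => x (j.succAbove l) (Fin.rev k)) = 0 := by
  have key := alt_vanish (fun i => v (Fin.rev i)) (fun j k => x j (Fin.rev k))
  rw [← key]
  refine Finset.sum_congr rfl fun j _ => ?_
  congr 2
  exact Fintype.sum_equiv Fin.revPerm _ _ (fun i => by simp)

/-- Laplace expansion relating the cofactor-style sum in `pbar` to a full determinant. -/
lemma detExp {n : ℕ} (w : Fin (n + 2) → ℂ) (a : Fin (n + 1) → Fin (n + 2) → ℂ) :
    ∑ i : Fin (n + 2), (-1 : ℂ) ^ (i : ℕ) * w i *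
        Matrix.det (Matrix.of fun k l : Fin (n + 1) => a l (Fin.rev ((Fin.rev i).succAbove k)))
      = (-1 : ℂ) ^ (n + 1) *
        Matrix.det (Matrix.of fun k l : Fin (n + 2) =>
          (Fin.cons w a : Fin (n + 2) → Fin (n + 2) → ℂ) l (Fin.rev k)) := by
  conv_rhs => rw [Matrix.det_succ_column_zero]
  rw [Finset.mul_sum]
  refine Fintype.sum_equiv Fin.revPerm _ _ fun i => ?_
  have hM : ((Matrix.of fun k l : Fin (n + 2) =>
        (Fin.cons w a : Fin (n + 2) → Fin (n + 2) → ℂ) l (Fin.rev k)).submatrix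
        (Fin.revPerm i).succAbove Fin.succ)
      = Matrix.of fun k l : Fin (n + 1) => a l (Fin.rev ((Fin.rev i).succAbove k)) := by
    ext k l
    simp [Fin.revPerm]
  rw [hM]
  have h0 : (Matrix.of fun k l : Fin (n + 2) =>
      (Fin.cons w a : Fin (n + 2) → Fin (n + 2) → ℂ) l (Fin.rev k)) (Fin.revPerm i) 0 = w i := by
    simp [Fin.revPerm]
  rw [h0]
  have hri : ((Fin.revPerm i : Fin (n + 2)) : ℕ) + (i : ℕ) = n + 1 := by
    simp [Fin.revPerm, Fin.val_rev]; omega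
  have hsign : (-1 : ℂ) ^ (n + 1) * (-1 : ℂ) ^ (i : ℕ)
      = (-1 : ℂ) ^ ((Fin.revPerm i : Fin (n+2)) : ℕ) := by
    rw [← hri, pow_add, mul_assoc, neg_one_pow_mul_self, mul_one]
  rw [← hsign]
  have h2 := neg_one_pow_mul_self (n + 1)
  linear_combination (-((-1 : ℂ) ^ (i : ℕ) * w i *
    Matrix.det (Matrix.of fun k l : Fin (n + 1) => a l (Fin.rev ((Fin.rev i).succAbove k))))) * h2

/-- `pbar` as a single determinant with the extra column `v*h` in front. -/
lemma pbar_eq {n : ℕ} (v : Fin (n + 2) → ℂ) (g : Matrix (Fin (n + 2)) (Fin (n + 2)) ℂ)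
    (G : Fin (n + 1) → Matrix (Fin (n + 2)) (Fin (n + 2)) ℂ) :
    pbar v g G = 2 * (-1 : ℂ) ^ ((n + 2) * (n + 1) / 2) * ((-1 : ℂ) ^ (n + 1) *
      Matrix.det (Matrix.of fun k l : Fin (n + 2) =>
        (Fin.cons (vstarM v g) (fun l' => vstarM v (G l')) : Fin (n + 2) → Fin (n + 2) → ℂ)
          l (Fin.rev k))) := by
  unfold pbar
  rw [detExp (vstarM v g) (fun l => vstarM v (G l))]

lemma vstarM_add_smul {N : ℕ} (v : Fin N → ℂ) (h H : Matrix (Fin N) (Fin N) ℂ) (s : ℂ)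
    (i : Fin N) : vstarM v (h + s • H) i = vstarM v h i + s * vstarM v H i := by
  unfold vstarM
  rw [Finset.mul_sum, ← Finset.sum_add_distrib]
  refine Finset.sum_congr rfl fun j _ => ?_
  simp [Matrix.add_apply]
  ring

lemma vhv_add_smul {N : ℕ} (v : Fin N → ℂ) (h H : Matrix (Fin N) (Fin N) ℂ) (s : ℂ) :
    vhv v (h + s • H) = vhv v h + s * vhv v H := by
  unfold vhv
  simp only [vstarM_add_smul]
  rw [Finset.mul_sum, ← Finset.sum_add_distrib]
  exact Finset.sum_congr rfl fun i _ => by ring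

lemma pbar_add_smul {n : ℕ} (v : Fin (n + 2) → ℂ) (h H : Matrix (Fin (n + 2)) (Fin (n + 2)) ℂ)
    (s : ℂ) (G : Fin (n + 1) → Matrix (Fin (n + 2)) (Fin (n + 2)) ℂ) :
    pbar v (h + s • H) G = pbar v h G + s * pbar v H G := by
  unfold pbar
  simp only [vstarM_add_smul]
  have : ∑ i : Fin (n + 2), (-1 : ℂ) ^ (i : ℕ) * (vstarM v h i + s * vstarM v H i) *
        Matrix.det (Matrix.of fun k l : Fin (n + 1) =>
          vstarM v (G l) (Fin.rev ((Fin.rev i).succAbove k)))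
      = (∑ i : Fin (n + 2), (-1 : ℂ) ^ (i : ℕ) * vstarM v h i *
          Matrix.det (Matrix.of fun k l : Fin (n + 1) =>
            vstarM v (G l) (Fin.rev ((Fin.rev i).succAbove k))))
        + s * ∑ i : Fin (n + 2), (-1 : ℂ) ^ (i : ℕ) * vstarM v H i *
          Matrix.det (Matrix.of fun k l : Fin (n + 1) =>
            vstarM v (G l) (Fin.rev ((Fin.rev i).succAbove k))) := by
    rw [Finset.mul_sum, ← Finset.sum_add_distrib]
    exact Finset.sum_congr rfl fun i _ => by ring
  rw [this]
  ring

lemma deriv_aux (m : ℤ) (c cj P Q : ℂ) (hc : c ≠ 0) :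
    deriv (fun t : ℝ => (c + (t : ℂ) * cj) ^ m * (P + (t : ℂ) * Q)) 0
      = ((m : ℂ) * c ^ (m - 1) * cj) * P + c ^ m * Q := by
  have h1 : HasDerivAt (fun z : ℂ => c + z * cj) cj 0 := by
    simpa using ((hasDerivAt_id (0 : ℂ)).mul_const cj).const_add c
  have h2 : HasDerivAt (fun z : ℂ => (c + z * cj) ^ m) ((m : ℂ) * c ^ (m - 1) * cj) 0 := by
    have h0 : HasDerivAt (fun z : ℂ => z ^ m) ((m : ℂ) * c ^ (m - 1)) (c + (0 : ℂ) * cj) := by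
      simpa using hasDerivAt_zpow m (c + (0 : ℂ) * cj) (Or.inl (by simpa using hc))
    exact h0.comp (0 : ℂ) h1
  have h3 : HasDerivAt (fun z : ℂ => P + z * Q) Q 0 := by
    simpa using ((hasDerivAt_id (0 : ℂ)).mul_const Q).const_add P
  have h4 := (h2.mul h3).comp_ofReal (z := (0 : ℝ))
  have := h4.deriv
  simpa using this

lemma vhv_ne_zero {N : ℕ} (v : Fin N → ℂ) (hv : v ≠ 0) (h : Matrix (Fin N) (Fin N) ℂ)
    (hh : h.PosDef) : vhv v h ≠ 0 := by
  have hpos := hh.dotProduct_mulVec_pos hv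
  have heq : vhv v h = dotProduct (star v) (h *ᵥ v) := by
    unfold vhv vstarM
    rw [dotProduct]
    simp only [Finset.sum_mul, mulVec, dotProduct, Pi.star_apply, Finset.mul_sum]
    rw [Finset.sum_comm]
    refine Finset.sum_congr rfl fun j _ => ?_
    refine Finset.sum_congr rfl fun i _ => ?_
    simp [RCLike.star_def]
    ring
  rw [heq]
  exact ne_of_gt hpos

theorem pbar_form_closed {n : ℕ} (v : Fin (n + 2) → ℂ) (hv : v ≠ 0)
    (h : Matrix (Fin (n + 2)) (Fin (n + 2)) ℂ) (hh : h.PosDef)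
    (H : Fin (n + 2) → Matrix (Fin (n + 2)) (Fin (n + 2)) ℂ)
    (hH : ∀ j, (H j).IsHermitian) :
    ∑ j : Fin (n + 2), (-1 : ℂ) ^ (j : ℕ) *
        deriv (fun t : ℝ =>
          (vhv v (h + (t : ℂ) • H j)) ^ (-(n + 2 : ℤ)) *
            pbar v (h + (t : ℂ) • H j) (fun k => H (j.succAbove k))) 0
      = 0 := by
  classical
  have hc : vhv v h ≠ 0 := vhv_ne_zero v hv h hh
  set m : ℤ := -(n + 2 : ℤ) with hm
  -- Step 1: compute the derivatives
  have hderiv : ∀ j : Fin (n + 2),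
      deriv (fun t : ℝ =>
          (vhv v (h + (t : ℂ) • H j)) ^ m *
            pbar v (h + (t : ℂ) • H j) (fun k => H (j.succAbove k))) 0
        = ((m : ℂ) * (vhv v h) ^ (m - 1) * vhv v (H j)) *
            pbar v h (fun k => H (j.succAbove k))
          + (vhv v h) ^ m * pbar v (H j) (fun k => H (j.succAbove k)) := by
    intro j
    have hfun : (fun t : ℝ =>
        (vhv v (h + (t : ℂ) • H j)) ^ m *
          pbar v (h + (t : ℂ) • H j) (fun k => H (j.succAbove k)))
        = (fun t : ℝ =>
          (vhv v h + (t : ℂ) * vhv v (H j)) ^ m *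
            (pbar v h (fun k => H (j.succAbove k))
              + (t : ℂ) * pbar v (H j) (fun k => H (j.succAbove k)))) := by
      funext t
      rw [vhv_add_smul, pbar_add_smul]
    rw [hfun, deriv_aux m _ _ _ _ hc]
  simp only [hderiv]
  -- abbreviations
  set D : ℂ := Matrix.det (Matrix.of fun k l : Fin (n + 2) => vstarM v (H l) (Fin.rev k))
    with hD
  set K : ℂ := 2 * (-1 : ℂ) ^ ((n + 2) * (n + 1) / 2) * (-1 : ℂ) ^ (n + 1) with hK
  -- Claim A: ∑ⱼ (−1)ʲ pbar(v,Hⱼ)(H∘ĵ) = K (n+2) D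
  have hA : ∑ j : Fin (n + 2), (-1 : ℂ) ^ (j : ℕ) *
      pbar v (H j) (fun k => H (j.succAbove k)) = K * ((n + 2 : ℂ) * D) := by
    have step : ∀ j : Fin (n + 2), pbar v (H j) (fun k => H (j.succAbove k))
        = K * ((-1 : ℂ) ^ (j : ℕ) * D) := by
      intro j
      have hcons : (Fin.cons (vstarM v (H j))
            (fun l' => vstarM v (H (j.succAbove l'))) : Fin (n + 2) → Fin (n + 2) → ℂ)
          = fun l => vstarM v (H (j.cycleRange.symm l)) := by
        funext l
        refine Fin.cases ?_ (fun m' => ?_) l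
        · simp [Fin.cycleRange_symm_zero]
        · simp [Fin.cycleRange_symm_succ]
      have hmat : (Matrix.of fun k l : Fin (n + 2) =>
            vstarM v (H (j.cycleRange.symm l)) (Fin.rev k))
          = (Matrix.of fun k l : Fin (n + 2) => vstarM v (H l) (Fin.rev k)).submatrix
            id ⇑(j.cycleRange.symm) := by
        ext k l
        simp [Matrix.submatrix_apply]
      have hdet' : Matrix.det (Matrix.of fun k l : Fin (n + 2) =>
            (Fin.cons (vstarM v (H j)) (fun l' => vstarM v (H (j.succAbove l'))) :
              Fin (n + 2) → Fin (n + 2) → ℂ) l (Fin.rev k))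
          = (-1 : ℂ) ^ (j : ℕ) * D := by
        rw [hcons, hmat, Matrix.det_permute', Equiv.Perm.sign_symm, Fin.sign_cycleRange, ← hD]
        push_cast
        simp
      rw [pbar_eq, hdet', hK]
      ring
    calc ∑ j : Fin (n + 2), (-1 : ℂ) ^ (j : ℕ) * pbar v (H j) (fun k => H (j.succAbove k))
        = ∑ _j : Fin (n + 2), K * D := by
          refine Finset.sum_congr rfl fun j _ => ?_
          rw [step j]
          have := neg_one_pow_mul_self (j : ℕ)
          linear_combination (K * D) * this
      _ = K * ((n + 2 : ℂ) * D) := by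
          rw [Finset.sum_const, Finset.card_univ, Fintype.card_fin, nsmul_eq_mul]
          push_cast
          ring
  -- Claim B: ∑ⱼ (−1)ʲ (v*Hⱼv)·pbar(v,h)(H∘ĵ) = K (v*hv) D
  have hB : ∑ j : Fin (n + 2), (-1 : ℂ) ^ (j : ℕ) *
      (vhv v (H j) * pbar v h (fun k => H (j.succAbove k))) = K * (vhv v h * D) := by
    have key := alt_vanish' v
      (Fin.cons (vstarM v h) (fun l => vstarM v (H l)) : Fin (n + 3) → Fin (n + 2) → ℂ)
    rw [Fin.sum_univ_succ] at key
    simp only [Fin.cons_zero, Fin.cons_succ, Fin.succAbove_zero, Fin.val_zero, pow_zero,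
      one_mul, Fin.val_succ] at key
    -- rewrite succ-term matrices
    have hEm : ∀ m' : Fin (n + 2),
        (Matrix.of fun k l : Fin (n + 2) =>
          (Fin.cons (vstarM v h) (fun l' => vstarM v (H l')) : Fin (n + 3) → Fin (n + 2) → ℂ)
            ((Fin.succ m').succAbove l) (Fin.rev k))
        = Matrix.of fun k l : Fin (n + 2) =>
          (Fin.cons (vstarM v h) (fun l' => vstarM v (H (m'.succAbove l'))) :
            Fin (n + 2) → Fin (n + 2) → ℂ) l (Fin.rev k) := by
      intro m'
      ext k l
      refine Fin.cases ?_ (fun l' => ?_) l <;> simp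
    simp only [hEm] at key
    have hvhv_def : ∀ M : Matrix (Fin (n+2)) (Fin (n+2)) ℂ,
        (∑ i, vstarM v M i * v i) = vhv v M := fun M => rfl
    simp only [hvhv_def] at key
    rw [← hD] at key
    -- now key : vhv v h * D + ∑ m', (-1)^(m'+1) * vhv v (H m') * det(E m') = 0
    calc ∑ j : Fin (n + 2), (-1 : ℂ) ^ (j : ℕ) *
          (vhv v (H j) * pbar v h (fun k => H (j.succAbove k)))
        = -K * ∑ j : Fin (n + 2), (-1 : ℂ) ^ ((j : ℕ) + 1) * vhv v (H j) *
            Matrix.det (Matrix.of fun k l : Fin (n + 2) =>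
              (Fin.cons (vstarM v h) (fun l' => vstarM v (H (j.succAbove l'))) :
                Fin (n + 2) → Fin (n + 2) → ℂ) l (Fin.rev k)) := by
          rw [Finset.mul_sum]
          refine Finset.sum_congr rfl fun j _ => ?_
          rw [pbar_eq, hK]
          rw [pow_succ]
          ring
      _ = K * (vhv v h * D) := by
          have hsum : ∑ j : Fin (n + 2), (-1 : ℂ) ^ ((j : ℕ) + 1) * vhv v (H j) *
              Matrix.det (Matrix.of fun k l : Fin (n + 2) =>
                (Fin.cons (vstarM v h) (fun l' => vstarM v (H (j.succAbove l'))) :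
                  Fin (n + 2) → Fin (n + 2) → ℂ) l (Fin.rev k)) = -(vhv v h * D) := by
            linear_combination key
          rw [hsum]
          ring
  -- Step 3: combine
  have hsplit : ∑ j : Fin (n + 2), (-1 : ℂ) ^ (j : ℕ) *
      (((m : ℂ) * (vhv v h) ^ (m - 1) * vhv v (H j)) * pbar v h (fun k => H (j.succAbove k))
        + (vhv v h) ^ m * pbar v (H j) (fun k => H (j.succAbove k)))
      = (m : ℂ) * (vhv v h) ^ (m - 1) *
          (∑ j : Fin (n + 2), (-1 : ℂ) ^ (j : ℕ) *
            (vhv v (H j) * pbar v h (fun k => H (j.succAbove k))))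
        + (vhv v h) ^ m *
          (∑ j : Fin (n + 2), (-1 : ℂ) ^ (j : ℕ) *
            pbar v (H j) (fun k => H (j.succAbove k))) := by
    rw [Finset.mul_sum, Finset.mul_sum, ← Finset.sum_add_distrib]
    exact Finset.sum_congr rfl fun j _ => by ring
  rw [hsplit, hA, hB]
  have hzp : (vhv v h) ^ (m - 1) * vhv v h = (vhv v h) ^ m := by
    rw [← zpow_add_one₀ hc]
    ring_nf
  have hmc : (m : ℂ) = -(n + 2 : ℂ) := by rw [hm]; push_cast; ring
  rw [hmc]
  linear_combination (-(n + 2 : ℂ) * K * D) * hzp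

end
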